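/- Let d be a positive non-square integer and let a, b, k, M, l, m, r be integers with a² − d·b² = k ≠ 0, gcd(a,b) = 1, 0 ≤ M < |k|, b·M ≡ −a (mod |k|), l > 0, m = M·l + r·|k|, and suppose (m, l) minimizes |m' − √d·l'| over all positive integer pairs (m', l') with l' ≤ L and k | (a·l' + b·m'). Then gcd(l, r) = 1. -/

import Mathlib

theorem gen_chakravala_l_r_coprime (d L a b k M l m r : ℤ)
    (hd : 0 < d) (hdns : ¬ IsSquare d)
    (hk : a ^ 2 - d * b ^ 2 = k) (hk0 : k ≠ 0)
    (hcop : Int.gcd a b = 1)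
    (hM0 : 0 ≤ M) (hMk : M < |k|)
    (hM : b * M ≡ -a [ZMOD |k|])
    (hl : 0 < l) (hlL : l ≤ L) (hm : m = M * l + r * |k|)
    (hmpos : 0 < m) (hdvd : k ∣ a * l + b * m)
    (hmin : ∀ m' l' : ℤ, 0 < m' → 0 < l' → l' ≤ L → k ∣ a * l' + b * m' →
      |(m : ℝ) - Real.sqrt d * l| ≤ |(m' : ℝ) - Real.sqrt d * l'|) :
    Int.gcd l r = 1 := by
  by_contra hne
  set n : ℤ := (Int.gcd l r : ℤ) with hn
  have hnl : n ∣ l := Int.gcd_dvd_left l r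
  have hnr : n ∣ r := Int.gcd_dvd_right l r
  have hg0 : l.gcd r ≠ 0 := by
    intro h
    rw [Int.gcd_eq_zero_iff] at h
    omega
  have hn0 : 0 < n := by rw [hn]; exact_mod_cast Nat.pos_of_ne_zero hg0
  have hn2 : 2 ≤ n := by
    have : 2 ≤ l.gcd r := by omega
    rw [hn]; exact_mod_cast this
  obtain ⟨l', hl'⟩ := hnl
  obtain ⟨r', hr'⟩ := hnr
  have hnm : m = n * (M * l' + r' * |k|) := by rw [hm, hl', hr']; ring
  set m' : ℤ := M * l' + r' * |k| with hm'
  have hl'pos : 0 < l' := by nlinarith [hl, hl'.symm ▸ hl]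
  have hm'pos : 0 < m' := by nlinarith [hnm ▸ hmpos]
  have hl'L : l' ≤ L := by nlinarith
  have habM : |k| ∣ a + b * M := by
    have := hM.dvd
    obtain ⟨c, hc⟩ := this; exact ⟨-c, by linear_combination -hc⟩
  have hdvd' : k ∣ a * l' + b * m' := by
    rw [← abs_dvd]
    obtain ⟨c, hc⟩ := habM
    exact ⟨c * l' + b * r', by rw [hm']; nlinarith [hc]⟩
  have hle := hmin m' l' hm'pos hl'pos hl'L hdvd'
  have hcastm : (m : ℝ) = n * m' := by exact_mod_cast congrArg (Int.cast : ℤ → ℝ) hnm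
  have hcastl : (l : ℝ) = n * l' := by exact_mod_cast congrArg (Int.cast : ℤ → ℝ) hl'
  have hnR : (2 : ℝ) ≤ (n : ℝ) := by exact_mod_cast hn2
  have key : |(m : ℝ) - Real.sqrt d * l| = (n : ℝ) * |(m' : ℝ) - Real.sqrt d * l'| := by
    rw [hcastm, hcastl, show (n:ℝ) * m' - Real.sqrt d * (n * l') = n * ((m':ℝ) - Real.sqrt d * l') by ring,
      abs_mul, abs_of_pos (show (0:ℝ) < n by linarith)]
  have hzero : |(m' : ℝ) - Real.sqrt d * l'| = 0 := by
    rw [key] at hle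
    nlinarith [abs_nonneg ((m' : ℝ) - Real.sqrt d * l')]
  have heq : (m' : ℝ) = Real.sqrt d * l' := by
    have := abs_eq_zero.mp hzero; linarith
  have hirr : Irrational (Real.sqrt d) :=
    (irrational_sqrt_intCast_iff_of_nonneg hd.le).mpr hdns
  have hsd : Real.sqrt d = ((m' : ℚ) / (l' : ℚ) : ℚ) := by
    have hl'ne : (l' : ℝ) ≠ 0 := by exact_mod_cast hl'pos.ne'
    push_cast
    field_simp
    linarith [heq]
  exact hirr ⟨_, hsd.symm⟩
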